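/- arXiv:1304.7453 — 2 statements merged into one kernel-verified Lean document; each statement's English description precedes it below -/
import Mathlib

section
/- Let E be a right Hilbert C*-module over a C*-algebra A such that the C*-algebra K(E) of compact operators on E is unital. Then E is self-dual: every bounded A-linear map φ : E → A is of the form φ(x) = ⟨y, x⟩ for some y ∈ E. -/
open scoped RightActions

/-- The Hilbert C⋆-module class as Mathlib defined it in December 2024: a *right* `A`-module
structure given by `SMul Aᵐᵒᵖ E`, with inner product satisfying `⟪x, y <• a⟫ = ⟪x, y⟫ * a`. -/
class RightCStarModule (A : outParam <| Type*) (E : Type*) [NonUnitalSemiring A] [StarRing A]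
    [Module ℂ A] [AddCommGroup E] [Module ℂ E] [PartialOrder A] [SMul Aᵐᵒᵖ E] [Norm A] [Norm E]
    extends Inner A E where
  inner_add_right {x} {y} {z} : inner x (y + z) = inner x y + inner x z
  inner_self_nonneg {x} : 0 ≤ inner x x
  inner_self {x} : inner x x = 0 ↔ x = 0
  inner_op_smul_right {a : A} {x y : E} : inner x (y <• a) = inner x y * a
  inner_smul_right_complex {z : ℂ} {x} {y} : inner x (z • y) = z • inner x y
  star_inner x y : star (inner x y) = inner y x
  norm_eq_sqrt_norm_inner_self x : ‖x‖ = √‖inner x x‖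

/-- Let `E` be a right Hilbert C*-module over a C*-algebra `A` such that `K(E)` is unital,
i.e. there are `u₁, …, uₙ, v₁, …, vₙ ∈ E` with `∑ i, θ_{uᵢ,vᵢ} = id_E`.  Then `E` is
self-dual: every bounded `A`-linear map `φ : E → A` is of the form `φ = ⟨y, ·⟩`
for some `y ∈ E`. -/
theorem stmt_3 (A E : Type*) [NonUnitalCStarAlgebra A] [PartialOrder A]
    [StarOrderedRing A] [NormedAddCommGroup E] [Module ℂ E] [SMul Aᵐᵒᵖ E]
    [RightCStarModule A E]
    -- `K(E)` is unital: the identity is a finite sum of rank-one operators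
    (hunit : ∃ (n : ℕ) (u v : Fin n → E),
      ∀ x : E, ∑ i, (u i) <• (inner A (v i) x : A) = x)
    (φ : E →+ A) (hφ_cont : Continuous φ)
    (hφ_mod : ∀ (x : E) (a : A), φ (x <• a) = φ x * a) :
    ∃ y : E, ∀ x : E, φ x = (inner A y x : A) := by
  obtain ⟨n, u, v, hid⟩ := hunit
  refine ⟨∑ i, (v i) <• star (φ (u i)), fun x => ?_⟩
  have h0 : ∀ x : E, (inner A x (0:E) : A) = 0 := fun x => by
    have := RightCStarModule.inner_add_right (A := A) (x := x) (y := (0:E)) (z := 0)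
    simpa using this
  have hsum : ∀ (x : E) (s : Finset (Fin n)) (w : Fin n → E),
      (inner A x (∑ i ∈ s, w i) : A) = ∑ i ∈ s, (inner A x (w i) : A) := by
    intro x s w
    induction s using Finset.induction_on with
    | empty => simp [h0]
    | insert a s ha ih =>
      rw [Finset.sum_insert ha, Finset.sum_insert ha, RightCStarModule.inner_add_right, ih]
  calc φ x = φ (∑ i, (u i) <• (inner A (v i) x : A)) := by rw [hid]
    _ = ∑ i, φ ((u i) <• (inner A (v i) x : A)) := map_sum φ _ _
    _ = ∑ i, φ (u i) * (inner A (v i) x : A) := by simp [hφ_mod]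
    _ = (inner A (∑ i, (v i) <• star (φ (u i))) x : A) := by
        rw [← RightCStarModule.star_inner x (∑ i, (v i) <• star (φ (u i))), hsum, star_sum]
        refine Finset.sum_congr rfl fun i _ => ?_
        rw [RightCStarModule.inner_op_smul_right, star_mul, star_star, RightCStarModule.star_inner]
end

section
/- Let A be a C*-algebra and H a Hilbert space with A ⊗ K(H) (minimal tensor product) a C*-algebra of compact operators. If b ∈ A is positive with spectral projection χ_{1}(b) ∈ A (corresponding to eigenvalue 1) and q ∈ K(H) is a rank-one projection, then the corner χ_{1}(b)·A·χ_{1}(b) is finite dimensional. -/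
/-- Let `A` be a C*-algebra and `H` a Hilbert space, and let `T` (with the structure
map `t`) realize the minimal tensor product `A ⊗ K(H)`.  Assume `A ⊗ K(H)` is a
C*-algebra of compact operators, so that every projection in it has finite-dimensional
corner.  If `b ∈ A` is positive with spectral projection `p = χ_{{1}}(b) ∈ A` (so
`b p = p b = p`), and `q ∈ K(H)` is a rank-one projection, then the corner `pAp` is
finite dimensional. -/
theorem stmt_17 (A H T : Type*) [NonUnitalCStarAlgebra A]
    [NormedAddCommGroup H] [InnerProductSpace ℂ H] [CompleteSpace H]
    [NonUnitalCStarAlgebra T]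
    (t : A → (H →L[ℂ] H) → T)
    (ht_addl : ∀ a a' k, t (a + a') k = t a k + t a' k)
    (ht_addr : ∀ a k k', t a (k + k') = t a k + t a k')
    (ht_smul : ∀ (z : ℂ) a k, t (z • a) k = z • t a k ∧ t a (z • k) = z • t a k)
    (ht_mul : ∀ a a' k k', t a k * t a' k' = t (a * a') (k * k'))
    (ht_star : ∀ a k, star (t a k) = t (star a) (star k))
    (ht_norm : ∀ a k, ‖t a k‖ = ‖a‖ * ‖k‖)
    (ht_dense : closure (Submodule.span ℂ
      {z : T | ∃ (a : A) (k : H →L[ℂ] H), IsCompactOperator (⇑k) ∧ z = t a k} : Set T)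
      = Set.univ)
    -- `A ⊗ K(H)` is a C*-algebra of compact operators: all of its corners by
    -- projections are finite dimensional
    (hTcpt : ∀ e : T, IsSelfAdjoint e → IsIdempotentElem e →
      FiniteDimensional ℂ ↥(Submodule.span ℂ {x : T | ∃ z : T, x = e * z * e}))
    (b : A) (hb_pos : ∃ c : A, b = star c * c)
    (p : A) (hp_sa : IsSelfAdjoint p) (hp_idem : IsIdempotentElem p)
    -- `p` is the spectral projection of `b` for the eigenvalue `1`
    (hbp : b * p = p ∧ p * b = p)
    (q : H →L[ℂ] H) (hq_sa : IsSelfAdjoint q) (hq_idem : IsIdempotentElem q)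
    (hq_rank1 : ∃ ξ : H, ξ ≠ 0 ∧ LinearMap.range (q : H →ₗ[ℂ] H) = Submodule.span ℂ {ξ}) :
    FiniteDimensional ℂ ↥(Submodule.span ℂ {x : A | ∃ a : A, x = p * a * p}) := by

  -- the projection e = t p q in T
  set e : T := t p q with he
  have he_sa : IsSelfAdjoint e := by
    rw [IsSelfAdjoint, he, ht_star, hp_sa.star_eq, hq_sa.star_eq]
  have he_idem : IsIdempotentElem e := by
    rw [IsIdempotentElem, he, ht_mul, hp_idem.eq, hq_idem.eq]
  have hS : FiniteDimensional ℂ ↥(Submodule.span ℂ {x : T | ∃ z : T, x = e * z * e}) :=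
    hTcpt e he_sa he_idem
  -- q is nonzero
  have hq_ne : q ≠ 0 := by
    obtain ⟨ξ, hξ, hrange⟩ := hq_rank1
    intro hq0
    have : ξ ∈ LinearMap.range (q : H →ₗ[ℂ] H) := by
      rw [hrange]; exact Submodule.mem_span_singleton_self ξ
    obtain ⟨v, hv⟩ := this
    rw [hq0] at hv
    exact hξ (by simpa using hv.symm)
  -- the linear map a ↦ t a q
  let L : A →ₗ[ℂ] T :=
    { toFun := fun a => t a q
      map_add' := fun a a' => ht_addl a a' q
      map_smul' := fun z a => (ht_smul z a q).1 }
  have hLinj : Function.Injective L := by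
    intro a a' hL
    have h0 : L (a - a') = 0 := by rw [map_sub, hL, sub_self]
    have hn : ‖t (a - a') q‖ = 0 := by
      simpa [L] using congrArg norm h0
    rw [ht_norm] at hn
    have : ‖a - a'‖ = 0 := by
      rcases mul_eq_zero.mp hn with h | h
      · exact h
      · exact absurd (norm_eq_zero.mp h) hq_ne
    exact sub_eq_zero.mp (norm_eq_zero.mp this)
  have hmaps : ∀ x ∈ Submodule.span ℂ {x : A | ∃ a : A, x = p * a * p},
      L x ∈ Submodule.span ℂ {x : T | ∃ z : T, x = e * z * e} := by
    intro x hx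
    refine Submodule.span_induction ?_ ?_ ?_ ?_ hx
    · rintro _ ⟨a, rfl⟩
      apply Submodule.subset_span
      refine ⟨t a q, ?_⟩
      show t (p * a * p) q = t p q * t a q * t p q
      rw [ht_mul, ht_mul, hq_idem.eq, hq_idem.eq]
    · simpa using (Submodule.span ℂ {x : T | ∃ z : T, x = e * z * e}).zero_mem
    · intro x y _ _ hx hy
      rw [map_add]; exact Submodule.add_mem _ hx hy
    · intro c x _ hx
      rw [map_smul]; exact Submodule.smul_mem _ c hx
  let f := L.restrict hmaps
  have hfinj : Function.Injective f := by
    intro x y hxy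
    exact Subtype.ext (hLinj (congrArg Subtype.val hxy))
  exact FiniteDimensional.of_injective f hfinj
end
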